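/- (Alice–Bob–Alice, substitutes: revealing early is optimal.) Let W, X_A, X_B be finitely-valued random variables with X_A and X_B independent conditioning on W, and let S be any deterministic function of X_A. Then Alice's total expected payment from revealing S(X_A) in stage 1 and the rest of X_A in stage 3 (after Bob reveals X_B) is at most her payment from revealing everything in stage 1: I(S(X_A); W) + I(X_A; W | (X_B, S(X_A))) ≤ I(X_A; W). -/

import Mathlib

open scoped BigOperators

noncomputable section

variable {Ω : Type*} [Fintype Ω]

/-- `μ` is a probability mass function on the finite sample space `Ω`. -/
def IsPmf (μ : Ω → ℝ) : Prop := (∀ ω, 0 ≤ μ ω) ∧ ∑ ω, μ ω = 1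

open Classical in
/-- Probability of the event `A` under the pmf `μ`. -/
def pr (μ : Ω → ℝ) (A : Ω → Prop) : ℝ := ∑ ω, if A ω then μ ω else 0

/-- Conditional probability of `A` given `B` (with the convention `x / 0 = 0`). -/
def cpr (μ : Ω → ℝ) (A B : Ω → Prop) : ℝ := pr μ (fun ω => A ω ∧ B ω) / pr μ B

open Classical in
/-- Mutual information between the random variables `X` and `Y`,
`I(X;Y) = Σ_{x,y} P[X=x,Y=y] log( P[X=x,Y=y] / (P[X=x]·P[Y=y]) )`. -/
def mi (μ : Ω → ℝ) {S T : Type*} (X : Ω → S) (Y : Ω → T) : ℝ :=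
  ∑ x ∈ Finset.univ.image X, ∑ y ∈ Finset.univ.image Y,
    pr μ (fun ω => X ω = x ∧ Y ω = y) *
      Real.log (pr μ (fun ω => X ω = x ∧ Y ω = y) /
        (pr μ (fun ω => X ω = x) * pr μ (fun ω => Y ω = y)))

open Classical in
/-- Mutual information between `X` and `Y` conditioned on the event `B`,
`I(X;Y|B) = Σ_{x,y} P[X=x,Y=y|B] log( P[X=x,Y=y|B] / (P[X=x|B]·P[Y=y|B]) )`. -/
def miOn (μ : Ω → ℝ) {S T : Type*} (X : Ω → S) (Y : Ω → T) (B : Ω → Prop) : ℝ :=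
  ∑ x ∈ Finset.univ.image X, ∑ y ∈ Finset.univ.image Y,
    cpr μ (fun ω => X ω = x ∧ Y ω = y) B *
      Real.log (cpr μ (fun ω => X ω = x ∧ Y ω = y) B /
        (cpr μ (fun ω => X ω = x) B * cpr μ (fun ω => Y ω = y) B))

open Classical in
/-- Conditional mutual information `I(X;Y|Z) = E_Z[ I(X;Y|Z=z) ]`. -/
def cmi (μ : Ω → ℝ) {S T U : Type*} (X : Ω → S) (Y : Ω → T) (Z : Ω → U) : ℝ :=
  ∑ z ∈ Finset.univ.image Z,
    pr μ (fun ω => Z ω = z) * miOn μ X Y (fun ω => Z ω = z)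

/-- `X` and `Y` are conditionally independent given `Z` under `μ`:
`P[X=x, Y=y | Z=z] = P[X=x | Z=z] · P[Y=y | Z=z]` for every `x`, `y`, `z`
(stated multiplicatively so that it also covers `P[Z=z] = 0`). -/
def CondIndep (μ : Ω → ℝ) {S T U : Type*} (X : Ω → S) (Y : Ω → T) (Z : Ω → U) : Prop :=
  ∀ (x : S) (y : T) (z : U),
    pr μ (fun ω => Z ω = z) * pr μ (fun ω => X ω = x ∧ Y ω = y ∧ Z ω = z)
      = pr μ (fun ω => X ω = x ∧ Z ω = z) * pr μ (fun ω => Y ω = y ∧ Z ω = z)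

open Classical

lemma pr_nonneg {μ : Ω → ℝ} (hμ0 : ∀ ω, 0 ≤ μ ω) (A : Ω → Prop) : 0 ≤ pr μ A := by
  apply Finset.sum_nonneg; intro ω _; split <;> simp [hμ0 ω]

lemma pr_mono {μ : Ω → ℝ} (hμ0 : ∀ ω, 0 ≤ μ ω) {A B : Ω → Prop}
    (h : ∀ ω, A ω → B ω) : pr μ A ≤ pr μ B := by
  apply Finset.sum_le_sum; intro ω _
  by_cases hA : A ω
  · simp [hA, h ω hA]
  · simp only [hA, if_neg, if_false]
    split <;> simp [hμ0 ω]

lemma pr_congr {μ : Ω → ℝ} {A B : Ω → Prop} (h : ∀ ω, A ω ↔ B ω) : pr μ A = pr μ B := by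
  unfold pr; exact Finset.sum_congr rfl fun ω _ => by rw [h ω]

lemma pr_eq_zero {μ : Ω → ℝ} {A : Ω → Prop} (h : ∀ ω, ¬ A ω) : pr μ A = 0 := by
  unfold pr; simp [h]

lemma pr_pos {μ : Ω → ℝ} (hμ0 : ∀ ω, 0 ≤ μ ω) {A : Ω → Prop} {ω₀ : Ω}
    (hA : A ω₀) (hpos : 0 < μ ω₀) : 0 < pr μ A := by
  unfold pr
  apply Finset.sum_pos' (fun ω _ => by split <;> simp [hμ0 ω])
  exact ⟨ω₀, Finset.mem_univ _, by simp [hA, hpos]⟩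

lemma pr_eq_zero_of_le {μ : Ω → ℝ} (hμ0 : ∀ ω, 0 ≤ μ ω) {A B : Ω → Prop}
    (h : ∀ ω, A ω → B ω) (hB : pr μ B = 0) : pr μ A = 0 :=
  le_antisymm (hB ▸ pr_mono hμ0 h) (pr_nonneg hμ0 A)

lemma pr_mul_cpr {μ : Ω → ℝ} (hμ0 : ∀ ω, 0 ≤ μ ω) (A B : Ω → Prop) :
    pr μ B * cpr μ A B = pr μ (fun ω => A ω ∧ B ω) := by
  unfold cpr
  by_cases hB : pr μ B = 0
  · rw [hB, pr_eq_zero_of_le hμ0 (fun ω h => h.2) hB]; simp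
  · field_simp

lemma sum_pr_mul {S : Type*} (μ : Ω → ℝ) (X : Ω → S) (s : Finset S)
    (hs : ∀ ω, X ω ∈ s) (F : S → ℝ) :
    ∑ x ∈ s, pr μ (fun ω => X ω = x) * F x = ∑ ω, μ ω * F (X ω) := by
  unfold pr
  simp only [Finset.sum_mul, ite_mul, zero_mul]
  rw [Finset.sum_comm]
  refine Finset.sum_congr rfl fun ω _ => ?_
  rw [Finset.sum_eq_single (X ω)]
  · simp
  · intro b _ hb
    exact if_neg (fun h => hb h.symm)
  · intro hmem; exact absurd (hs ω) hmem

lemma pr_partition {S : Type*} (μ : Ω → ℝ) (X : Ω → S) (A : Ω → Prop) :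
    ∑ x ∈ Finset.univ.image X, pr μ (fun ω => X ω = x ∧ A ω) = pr μ A := by
  have h1 : ∀ x, pr μ (fun ω => X ω = x ∧ A ω)
      = pr (fun ω => if A ω then μ ω else 0) (fun ω => X ω = x) := by
    intro x; unfold pr
    refine Finset.sum_congr rfl fun ω _ => ?_
    by_cases hX : X ω = x <;> by_cases hA : A ω <;> simp [hX, hA]
  simp only [h1]
  have := sum_pr_mul (fun ω => if A ω then μ ω else 0) X (Finset.univ.image X)
    (fun ω => Finset.mem_image_of_mem X (Finset.mem_univ ω)) (fun _ => 1)
  simpa [pr] using this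

lemma mi_eq {S T : Type*} (μ : Ω → ℝ) (X : Ω → S) (Y : Ω → T) :
    mi μ X Y = ∑ ω, μ ω * Real.log (pr μ (fun ω' => X ω' = X ω ∧ Y ω' = Y ω) /
      (pr μ (fun ω' => X ω' = X ω) * pr μ (fun ω' => Y ω' = Y ω))) := by
  classical
  unfold mi
  rw [← Finset.sum_product']
  have hs : ∀ ω, (X ω, Y ω) ∈ (Finset.univ.image X) ×ˢ (Finset.univ.image Y) := fun ω =>
    Finset.mem_product.2 ⟨Finset.mem_image_of_mem X (Finset.mem_univ ω),
      Finset.mem_image_of_mem Y (Finset.mem_univ ω)⟩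
  have key := sum_pr_mul μ (fun ω => (X ω, Y ω)) _ hs
    (fun p => Real.log (pr μ (fun ω => X ω = p.1 ∧ Y ω = p.2) /
      (pr μ (fun ω => X ω = p.1) * pr μ (fun ω => Y ω = p.2))))
  rw [← key]
  refine Finset.sum_congr rfl fun p _ => ?_
  rw [pr_congr (fun ω => by simp [Prod.ext_iff] :
    ∀ ω, ((X ω, Y ω) = p) ↔ (X ω = p.1 ∧ Y ω = p.2))]

lemma cmi_eq {S T U : Type*} (μ : Ω → ℝ) (hμ0 : ∀ ω, 0 ≤ μ ω)
    (X : Ω → S) (Y : Ω → T) (Z : Ω → U) :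
    cmi μ X Y Z = ∑ ω, μ ω * Real.log
      (cpr μ (fun ω' => X ω' = X ω ∧ Y ω' = Y ω) (fun ω' => Z ω' = Z ω) /
        (cpr μ (fun ω' => X ω' = X ω) (fun ω' => Z ω' = Z ω) *
         cpr μ (fun ω' => Y ω' = Y ω) (fun ω' => Z ω' = Z ω))) := by
  classical
  unfold cmi miOn
  simp only [Finset.mul_sum, ← mul_assoc, pr_mul_cpr hμ0]
  have step : ∀ z : U, (∑ x ∈ Finset.univ.image X, ∑ y ∈ Finset.univ.image Y,
      pr μ (fun ω => (X ω = x ∧ Y ω = y) ∧ Z ω = z) *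
        Real.log (cpr μ (fun ω => X ω = x ∧ Y ω = y) (fun ω => Z ω = z) /
          (cpr μ (fun ω => X ω = x) (fun ω => Z ω = z) *
           cpr μ (fun ω => Y ω = y) (fun ω => Z ω = z))))
      = ∑ p ∈ (Finset.univ.image X) ×ˢ (Finset.univ.image Y),
      pr μ (fun ω => (X ω = p.1 ∧ Y ω = p.2) ∧ Z ω = z) *
        Real.log (cpr μ (fun ω => X ω = p.1 ∧ Y ω = p.2) (fun ω => Z ω = z) /
          (cpr μ (fun ω => X ω = p.1) (fun ω => Z ω = z) *
           cpr μ (fun ω => Y ω = p.2) (fun ω => Z ω = z))) := fun z =>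
    (Finset.sum_product' ..).symm
  rw [show (∑ z ∈ Finset.univ.image Z, _ : ℝ) = _ from Finset.sum_congr rfl (fun z _ => step z)]
  rw [← Finset.sum_product']
  have hs : ∀ ω, (Z ω, (X ω, Y ω)) ∈ (Finset.univ.image Z) ×ˢ
      ((Finset.univ.image X) ×ˢ (Finset.univ.image Y)) := fun ω =>
    Finset.mem_product.2 ⟨Finset.mem_image_of_mem Z (Finset.mem_univ ω),
      Finset.mem_product.2 ⟨Finset.mem_image_of_mem X (Finset.mem_univ ω),
        Finset.mem_image_of_mem Y (Finset.mem_univ ω)⟩⟩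
  have key := sum_pr_mul μ (fun ω => (Z ω, (X ω, Y ω))) _ hs
    (fun q => Real.log (cpr μ (fun ω => X ω = q.2.1 ∧ Y ω = q.2.2) (fun ω => Z ω = q.1) /
      (cpr μ (fun ω => X ω = q.2.1) (fun ω => Z ω = q.1) *
       cpr μ (fun ω => Y ω = q.2.2) (fun ω => Z ω = q.1))))
  rw [← key]
  refine Finset.sum_congr rfl fun q _ => ?_
  rw [pr_congr (fun ω => by simp [Prod.ext_iff, and_comm] :
    ∀ ω, ((Z ω, (X ω, Y ω)) = q) ↔ ((X ω = q.2.1 ∧ Y ω = q.2.2) ∧ Z ω = q.1))]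


lemma perOmega {SA SB T V : Type*} (μ : Ω → ℝ) (hμ0 : ∀ ω, 0 ≤ μ ω)
    (W : Ω → T) (XA : Ω → SA) (XB : Ω → SB) (h : CondIndep μ XA XB W) (S' : SA → V)
    (ω : Ω) (hpos : 0 < μ ω) :
    Real.log (pr μ (fun ω' => XA ω' = XA ω ∧ W ω' = W ω) /
      (pr μ (fun ω' => XA ω' = XA ω) * pr μ (fun ω' => W ω' = W ω)))
    = Real.log (pr μ (fun ω' => S' (XA ω') = S' (XA ω) ∧ W ω' = W ω) /
        (pr μ (fun ω' => S' (XA ω') = S' (XA ω)) * pr μ (fun ω' => W ω' = W ω)))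
      + Real.log (cpr μ (fun ω' => XA ω' = XA ω ∧ W ω' = W ω)
            (fun ω' => (XB ω', S' (XA ω')) = (XB ω, S' (XA ω))) /
          (cpr μ (fun ω' => XA ω' = XA ω)
              (fun ω' => (XB ω', S' (XA ω')) = (XB ω, S' (XA ω))) *
           cpr μ (fun ω' => W ω' = W ω)
              (fun ω' => (XB ω', S' (XA ω')) = (XB ω, S' (XA ω)))))
      + Real.log ((pr μ (fun ω' => XA ω' = XA ω ∧ XB ω' = XB ω) *
            pr μ (fun ω' => S' (XA ω') = S' (XA ω))) /
          (pr μ (fun ω' => XB ω' = XB ω ∧ S' (XA ω') = S' (XA ω)) *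
            pr μ (fun ω' => XA ω' = XA ω))) := by
  classical
  -- name the basic probabilities
  set a := XA ω with ha
  set b := XB ω with hb
  set w := W ω with hw
  set s := S' a with hs
  -- rewrite the cpr's into plain pr's
  have e0 : pr μ (fun ω' => (XB ω', S' (XA ω')) = (b, s))
      = pr μ (fun ω' => XB ω' = b ∧ S' (XA ω') = s) :=
    pr_congr fun ω' => by simp [Prod.ext_iff]
  have e1 : pr μ (fun ω' => (XA ω' = a ∧ W ω' = w) ∧ (XB ω', S' (XA ω')) = (b, s))
      = pr μ (fun ω' => XA ω' = a ∧ XB ω' = b ∧ W ω' = w) :=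
    pr_congr fun ω' => by
      simp only [Prod.ext_iff]
      constructor
      · rintro ⟨⟨h1, h2⟩, h3, _⟩; exact ⟨h1, h3, h2⟩
      · rintro ⟨h1, h2, h3⟩; exact ⟨⟨h1, h3⟩, h2, by rw [h1]⟩
  have e2 : pr μ (fun ω' => XA ω' = a ∧ (XB ω', S' (XA ω')) = (b, s))
      = pr μ (fun ω' => XA ω' = a ∧ XB ω' = b) :=
    pr_congr fun ω' => by
      simp only [Prod.ext_iff]
      constructor
      · rintro ⟨h1, h2, _⟩; exact ⟨h1, h2⟩
      · rintro ⟨h1, h2⟩; exact ⟨h1, h2, by rw [h1]⟩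
  have e3 : pr μ (fun ω' => W ω' = w ∧ (XB ω', S' (XA ω')) = (b, s))
      = pr μ (fun ω' => (XB ω' = b ∧ S' (XA ω') = s) ∧ W ω' = w) :=
    pr_congr fun ω' => by
      simp only [Prod.ext_iff]; tauto
  -- positivity of all the probabilities involved
  have hpa : 0 < pr μ (fun ω' => XA ω' = a) := pr_pos hμ0 (ha ▸ rfl) hpos
  have hpw : 0 < pr μ (fun ω' => W ω' = w) := pr_pos hμ0 (hw ▸ rfl) hpos
  have hps : 0 < pr μ (fun ω' => S' (XA ω') = s) := pr_pos hμ0 (by rw [hs, ha]) hpos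
  have hpaw : 0 < pr μ (fun ω' => XA ω' = a ∧ W ω' = w) :=
    pr_pos hμ0 ⟨ha ▸ rfl, hw ▸ rfl⟩ hpos
  have hpsw : 0 < pr μ (fun ω' => S' (XA ω') = s ∧ W ω' = w) :=
    pr_pos hμ0 ⟨by rw [hs, ha], hw ▸ rfl⟩ hpos
  have hpbw : 0 < pr μ (fun ω' => XB ω' = b ∧ W ω' = w) :=
    pr_pos hμ0 ⟨hb ▸ rfl, hw ▸ rfl⟩ hpos
  have hpab : 0 < pr μ (fun ω' => XA ω' = a ∧ XB ω' = b) :=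
    pr_pos hμ0 ⟨ha ▸ rfl, hb ▸ rfl⟩ hpos
  have hpbs : 0 < pr μ (fun ω' => XB ω' = b ∧ S' (XA ω') = s) :=
    pr_pos hμ0 ⟨hb ▸ rfl, by rw [hs, ha]⟩ hpos
  have hpabw : 0 < pr μ (fun ω' => XA ω' = a ∧ XB ω' = b ∧ W ω' = w) :=
    pr_pos hμ0 ⟨ha ▸ rfl, hb ▸ rfl, hw ▸ rfl⟩ hpos
  have hpbsw : 0 < pr μ (fun ω' => (XB ω' = b ∧ S' (XA ω') = s) ∧ W ω' = w) :=
    pr_pos hμ0 ⟨⟨hb ▸ rfl, by rw [hs, ha]⟩, hw ▸ rfl⟩ hpos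
  -- conditional independence instance
  have hCI := h a b w
  -- derived: pw * pbsw = psw * pbw
  have hpart : pr μ (fun ω' => (XB ω' = b ∧ S' (XA ω') = s) ∧ W ω' = w)
      = ∑ a' ∈ Finset.univ.image XA,
          (if S' a' = s then pr μ (fun ω' => XA ω' = a' ∧ XB ω' = b ∧ W ω' = w) else 0) := by
    rw [← pr_partition μ XA (fun ω' => (XB ω' = b ∧ S' (XA ω') = s) ∧ W ω' = w)]
    refine Finset.sum_congr rfl fun a' _ => ?_
    by_cases hsa : S' a' = s
    · rw [if_pos hsa]
      refine pr_congr fun ω' => ?_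
      constructor
      · rintro ⟨h1, ⟨h2, _⟩, h3⟩; exact ⟨h1, h2, h3⟩
      · rintro ⟨h1, h2, h3⟩; exact ⟨h1, ⟨h2, by rw [h1, hsa]⟩, h3⟩
    · rw [if_neg hsa]
      exact pr_eq_zero fun ω' => fun ⟨h1, ⟨_, h2⟩, _⟩ => hsa (h1 ▸ h2)
  have hpart2 : pr μ (fun ω' => S' (XA ω') = s ∧ W ω' = w)
      = ∑ a' ∈ Finset.univ.image XA,
          (if S' a' = s then pr μ (fun ω' => XA ω' = a' ∧ W ω' = w) else 0) := by
    rw [← pr_partition μ XA (fun ω' => S' (XA ω') = s ∧ W ω' = w)]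
    refine Finset.sum_congr rfl fun a' _ => ?_
    by_cases hsa : S' a' = s
    · rw [if_pos hsa]
      refine pr_congr fun ω' => ?_
      constructor
      · rintro ⟨h1, _, h3⟩; exact ⟨h1, h3⟩
      · rintro ⟨h1, h3⟩; exact ⟨h1, by rw [h1, hsa], h3⟩
    · rw [if_neg hsa]
      exact pr_eq_zero fun ω' => fun ⟨h1, h2, _⟩ => hsa (h1 ▸ h2)
  have hbsw : pr μ (fun ω' => W ω' = w) * pr μ (fun ω' => (XB ω' = b ∧ S' (XA ω') = s) ∧ W ω' = w)
      = pr μ (fun ω' => S' (XA ω') = s ∧ W ω' = w) * pr μ (fun ω' => XB ω' = b ∧ W ω' = w) := by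
    rw [hpart, hpart2, Finset.mul_sum, Finset.sum_mul]
    refine Finset.sum_congr rfl fun a' _ => ?_
    by_cases hsa : S' a' = s
    · rw [if_pos hsa, if_pos hsa, h a' b w]
    · rw [if_neg hsa, if_neg hsa, mul_zero, zero_mul]
  -- abbreviations
  set pa := pr μ (fun ω' => XA ω' = a)
  set pw := pr μ (fun ω' => W ω' = w)
  set ps := pr μ (fun ω' => S' (XA ω') = s)
  set paw := pr μ (fun ω' => XA ω' = a ∧ W ω' = w)
  set psw := pr μ (fun ω' => S' (XA ω') = s ∧ W ω' = w)
  set pbw := pr μ (fun ω' => XB ω' = b ∧ W ω' = w)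
  set pab := pr μ (fun ω' => XA ω' = a ∧ XB ω' = b)
  set pbs := pr μ (fun ω' => XB ω' = b ∧ S' (XA ω') = s)
  set pabw := pr μ (fun ω' => XA ω' = a ∧ XB ω' = b ∧ W ω' = w)
  set pbsw := pr μ (fun ω' => (XB ω' = b ∧ S' (XA ω') = s) ∧ W ω' = w)
  -- the key multiplicative identity
  have hkey : psw * pabw = paw * pbsw := by
    apply mul_left_cancel₀ (mul_ne_zero hpw.ne' hpbw.ne')
    linear_combination pbw * psw * hCI - pbw * paw * hbsw
  -- rewrite the cpr's
  simp only [cpr, e0, e1, e2, e3]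
  -- combine logs
  rw [← Real.log_mul (by positivity) (by positivity), ← Real.log_mul (by positivity) (by positivity)]
  congr 1
  field_simp
  linear_combination (-1 : ℝ) * hkey

/-- Alice–Bob–Alice with substitutes: if `X_A` and `X_B` are independent conditioning
on `W` and `S'` is any deterministic function of `X_A`'s values, then Alice's total
expected payment from revealing `S'(X_A)` in stage 1 and the rest of `X_A` in stage 3
(after Bob reveals `X_B`) is at most her payment from revealing everything in stage 1:
`I(S'(X_A); W) + I(X_A; W | (X_B, S'(X_A))) ≤ I(X_A; W)`. -/
theorem aba_substitutes_reveal_early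
    {SA SB T V : Type*} (μ : Ω → ℝ) (hμ : IsPmf μ)
    (W : Ω → T) (XA : Ω → SA) (XB : Ω → SB)
    (h : CondIndep μ XA XB W) (S' : SA → V) :
    mi μ (fun ω => S' (XA ω)) W +
        cmi μ XA W (fun ω => (XB ω, S' (XA ω)))
      ≤ mi μ XA W := by
  classical
  obtain ⟨hμ0, hμ1⟩ := hμ
  rw [mi_eq μ (fun ω => S' (XA ω)) W, mi_eq μ XA W,
    cmi_eq μ hμ0 XA W (fun ω => (XB ω, S' (XA ω)))]
  rw [← sub_nonneg, ← Finset.sum_add_distrib, ← Finset.sum_sub_distrib]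
  -- the nonnegative "I(XA;XB|S)-like" quantity
  have hs2 : ∀ ω, (XA ω, XB ω) ∈ (Finset.univ.image XA) ×ˢ (Finset.univ.image XB) := fun ω =>
    Finset.mem_product.2 ⟨Finset.mem_image_of_mem XA (Finset.mem_univ ω),
      Finset.mem_image_of_mem XB (Finset.mem_univ ω)⟩
  have key := sum_pr_mul μ (fun ω => (XA ω, XB ω)) _ hs2
    (fun p => (pr μ (fun ω' => XB ω' = p.2 ∧ S' (XA ω') = S' p.1) *
        pr μ (fun ω' => XA ω' = p.1)) /
      (pr μ (fun ω' => XA ω' = p.1 ∧ XB ω' = p.2) *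
        pr μ (fun ω' => S' (XA ω') = S' p.1)))
  dsimp only at key
  have hR : ∑ ω, μ ω * ((pr μ (fun ω' => XB ω' = XB ω ∧ S' (XA ω') = S' (XA ω)) *
        pr μ (fun ω' => XA ω' = XA ω)) /
      (pr μ (fun ω' => XA ω' = XA ω ∧ XB ω' = XB ω) *
        pr μ (fun ω' => S' (XA ω') = S' (XA ω)))) ≤ 1 := by
    rw [← key]
    calc ∑ p ∈ (Finset.univ.image XA) ×ˢ (Finset.univ.image XB),
          pr μ (fun ω => (XA ω, XB ω) = p) *
            ((pr μ (fun ω' => XB ω' = p.2 ∧ S' (XA ω') = S' p.1) *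
                pr μ (fun ω' => XA ω' = p.1)) /
              (pr μ (fun ω' => XA ω' = p.1 ∧ XB ω' = p.2) *
                pr μ (fun ω' => S' (XA ω') = S' p.1)))
        ≤ ∑ p ∈ (Finset.univ.image XA) ×ˢ (Finset.univ.image XB),
            (pr μ (fun ω' => XA ω' = p.1) *
              pr μ (fun ω' => XB ω' = p.2 ∧ S' (XA ω') = S' p.1)) /
              pr μ (fun ω' => S' (XA ω') = S' p.1) := by
          refine Finset.sum_le_sum fun p _ => ?_
          rw [pr_congr (fun ω => by simp [Prod.ext_iff] :
            ∀ ω, ((XA ω, XB ω) = p) ↔ (XA ω = p.1 ∧ XB ω = p.2))]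
          by_cases hc : pr μ (fun ω' => XA ω' = p.1 ∧ XB ω' = p.2) = 0
          · rw [hc, zero_mul]
            exact div_nonneg (mul_nonneg (pr_nonneg hμ0 _) (pr_nonneg hμ0 _)) (pr_nonneg hμ0 _)
          · rw [mul_div_assoc', mul_div_mul_left _ _ hc, mul_comm]
      _ = ∑ x ∈ Finset.univ.image XA, pr μ (fun ω' => XA ω' = x) := by
          rw [Finset.sum_product]
          refine Finset.sum_congr rfl fun x _ => ?_
          dsimp only
          rw [← Finset.sum_div, ← Finset.mul_sum,
            pr_partition μ XB (fun ω' => S' (XA ω') = S' x)]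
          by_cases hps : pr μ (fun ω' => S' (XA ω') = S' x) = 0
          · rw [hps, pr_eq_zero_of_le hμ0 (fun ω' h' => by rw [h']) hps]
            simp
          · rw [mul_div_assoc, div_self hps, mul_one]
      _ = 1 := by
          have := sum_pr_mul μ XA (Finset.univ.image XA)
            (fun ω => Finset.mem_image_of_mem XA (Finset.mem_univ ω)) (fun _ => 1)
          simpa [hμ1] using this
  have nonneg : (0:ℝ) ≤ ∑ ω, μ ω * Real.log
      ((pr μ (fun ω' => XA ω' = XA ω ∧ XB ω' = XB ω) *
          pr μ (fun ω' => S' (XA ω') = S' (XA ω))) /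
        (pr μ (fun ω' => XB ω' = XB ω ∧ S' (XA ω') = S' (XA ω)) *
          pr μ (fun ω' => XA ω' = XA ω))) := by
    have step : ∀ ω ∈ Finset.univ, μ ω * (1 -
        ((pr μ (fun ω' => XB ω' = XB ω ∧ S' (XA ω') = S' (XA ω)) *
            pr μ (fun ω' => XA ω' = XA ω)) /
          (pr μ (fun ω' => XA ω' = XA ω ∧ XB ω' = XB ω) *
            pr μ (fun ω' => S' (XA ω') = S' (XA ω)))))
        ≤ μ ω * Real.log
        ((pr μ (fun ω' => XA ω' = XA ω ∧ XB ω' = XB ω) *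
            pr μ (fun ω' => S' (XA ω') = S' (XA ω))) /
          (pr μ (fun ω' => XB ω' = XB ω ∧ S' (XA ω') = S' (XA ω)) *
            pr μ (fun ω' => XA ω' = XA ω))) := by
      intro ω _
      by_cases hω : μ ω = 0
      · simp [hω]
      · have hpos := lt_of_le_of_ne (hμ0 ω) (Ne.symm hω)
        have hpab : 0 < pr μ (fun ω' => XA ω' = XA ω ∧ XB ω' = XB ω) :=
          pr_pos hμ0 ⟨rfl, rfl⟩ hpos
        have hps : 0 < pr μ (fun ω' => S' (XA ω') = S' (XA ω)) :=
          pr_pos hμ0 rfl hpos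
        have hpbs : 0 < pr μ (fun ω' => XB ω' = XB ω ∧ S' (XA ω') = S' (XA ω)) :=
          pr_pos hμ0 ⟨rfl, rfl⟩ hpos
        have hpa : 0 < pr μ (fun ω' => XA ω' = XA ω) := pr_pos hμ0 rfl hpos
        have hx : (0:ℝ) < (pr μ (fun ω' => XA ω' = XA ω ∧ XB ω' = XB ω) *
            pr μ (fun ω' => S' (XA ω') = S' (XA ω))) /
          (pr μ (fun ω' => XB ω' = XB ω ∧ S' (XA ω') = S' (XA ω)) *
            pr μ (fun ω' => XA ω' = XA ω)) := by positivity
        have h2 := Real.log_le_sub_one_of_pos (inv_pos.2 hx)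
        rw [Real.log_inv] at h2
        have h3 := h2
        rw [inv_div] at h3
        apply mul_le_mul_of_nonneg_left _ (hμ0 ω)
        linarith
    have A := Finset.sum_le_sum step
    have B : ∑ ω, μ ω * (1 -
        ((pr μ (fun ω' => XB ω' = XB ω ∧ S' (XA ω') = S' (XA ω)) *
            pr μ (fun ω' => XA ω' = XA ω)) /
          (pr μ (fun ω' => XA ω' = XA ω ∧ XB ω' = XB ω) *
            pr μ (fun ω' => S' (XA ω') = S' (XA ω)))))
        = (∑ ω, μ ω) - ∑ ω, μ ω *
        ((pr μ (fun ω' => XB ω' = XB ω ∧ S' (XA ω') = S' (XA ω)) *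
            pr μ (fun ω' => XA ω' = XA ω)) /
          (pr μ (fun ω' => XA ω' = XA ω ∧ XB ω' = XB ω) *
            pr μ (fun ω' => S' (XA ω') = S' (XA ω)))) := by
      rw [← Finset.sum_sub_distrib]
      exact Finset.sum_congr rfl fun ω _ => by ring
    rw [B, hμ1] at A
    linarith
  refine le_trans nonneg (le_of_eq (Finset.sum_congr rfl fun ω _ => ?_))
  by_cases hω : μ ω = 0
  · simp [hω]
  · have hpos := lt_of_le_of_ne (hμ0 ω) (Ne.symm hω)
    have hid := perOmega μ hμ0 W XA XB h S' ω hpos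
    rw [hid]
    ring
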